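/- Let n be a natural number and let f : ℝⁿ → ℝⁿ be a C¹ diffeomorphism (f is bijective, and both f and its inverse are continuously differentiable). Let φ : ℝⁿ → ℝ be a continuous function with φ(x) > 0 for all x, and suppose the measure μ = volume.withDensity (fun x => ENNReal.ofReal (φ x)) is invariant under f (Measure.map f μ = μ). If p ∈ ℝⁿ is a periodic point of f of period k ≥ 1 (i.e., f^[k](p) = p), then |det D(f^[k])(p)| = 1. -/

import Mathlib

open MeasureTheory
open scoped ENNReal

/-- If a `C¹` diffeomorphism of `ℝⁿ` preserves a measure with continuous positive density
with respect to Lebesgue measure, then at every periodic point `p` of period `k ≥ 1` the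
Jacobian of the return map `f^[k]` has absolute value `1`. -/
theorem jacobian_eq_one_of_periodic_of_acip (n : ℕ)
    (f : EuclideanSpace ℝ (Fin n) → EuclideanSpace ℝ (Fin n))
    (hbij : Function.Bijective f)
    (hf : ContDiff ℝ 1 f)
    (hfinv : ContDiff ℝ 1 (Function.invFun f))
    (φ : EuclideanSpace ℝ (Fin n) → ℝ)
    (hφc : Continuous φ)
    (hφpos : ∀ x, 0 < φ x)
    (hinv : Measure.map f (volume.withDensity (fun x => ENNReal.ofReal (φ x)))
      = volume.withDensity (fun x => ENNReal.ofReal (φ x)))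
    (p : EuclideanSpace ℝ (Fin n)) (k : ℕ) (hk : 1 ≤ k)
    (hp : f^[k] p = p) :
    |(fderiv ℝ (f^[k]) p).det| = 1 := by
  set μ := volume.withDensity (fun x => ENNReal.ofReal (φ x)) with hμ
  -- iterates are C¹ and preserve μ
  have hiterC : ∀ m : ℕ, ContDiff ℝ 1 (f^[m]) := by
    intro m
    induction m with
    | zero => simpa using contDiff_id
    | succ m ih => rw [Function.iterate_succ']; exact hf.comp ih
  have hitermap : ∀ m : ℕ, Measure.map (f^[m]) μ = μ := by
    intro m
    induction m with
    | zero => simp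
    | succ m ih =>
      rw [Function.iterate_succ', ← Measure.map_map hf.continuous.measurable
        (hiterC m).continuous.measurable, ih, hinv]
  set g := f^[k] with hgdef
  have hgC : ContDiff ℝ 1 g := hiterC k
  have hgbij : Function.Bijective g := hbij.iterate k
  have hginvC : Continuous ((Function.invFun f)^[k]) := hfinv.continuous.iterate k
  -- g is a homeomorphism
  let e : Homeomorph (EuclideanSpace ℝ (Fin n)) (EuclideanSpace ℝ (Fin n)) :=
    { toFun := g
      invFun := (Function.invFun f)^[k]
      left_inv := (Function.leftInverse_invFun hbij.1).iterate k
      right_inv := (Function.rightInverse_invFun hbij.2).iterate k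
      continuous_toFun := hgC.continuous
      continuous_invFun := hginvC }
  have hginv : Measure.map g μ = μ := hitermap k
  have hder : ∀ x, HasFDerivAt g (fderiv ℝ g x) x := fun x =>
    (hgC.differentiable one_ne_zero x).hasFDerivAt
  -- change of variables on any measurable set
  have key : ∀ s : Set (EuclideanSpace ℝ (Fin n)), MeasurableSet s →
      ∫⁻ x in s, ENNReal.ofReal (φ x) ∂volume
        = ∫⁻ x in s, ENNReal.ofReal |(fderiv ℝ g x).det| * ENNReal.ofReal (φ (g x)) ∂volume := by
    intro s hs
    have himg : MeasurableSet (g '' s) := e.measurableEmbedding.measurableSet_image.2 hs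
    have h1 : μ (g '' s) = μ s := by
      conv_lhs => rw [← hginv]
      rw [Measure.map_apply hgC.continuous.measurable himg,
        Set.preimage_image_eq s hgbij.1]
    have h2 : ∫⁻ x in g '' s, ENNReal.ofReal (φ x) ∂volume
        = ∫⁻ x in s, ENNReal.ofReal |(fderiv ℝ g x).det| * ENNReal.ofReal (φ (g x)) ∂volume :=
      lintegral_image_eq_lintegral_abs_det_fderiv_mul volume hs
        (fun x _ => (hder x).hasFDerivWithinAt) (hgbij.1.injOn) _
    rw [hμ, withDensity_apply _ hs, withDensity_apply _ himg] at h1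
    rw [← h2, ← h1]
  -- continuity of the two densities
  have hc1 : Continuous fun x => ENNReal.ofReal (φ x) :=
    ENNReal.continuous_ofReal.comp hφc
  have hdetc : Continuous fun x => |(fderiv ℝ g x).det| :=
    (ContinuousLinearMap.continuous_det.comp (hgC.continuous_fderiv one_ne_zero)).abs
  have hc2 : Continuous fun x =>
      ENNReal.ofReal |(fderiv ℝ g x).det| * ENNReal.ofReal (φ (g x)) := by
    have h : ∀ x, ENNReal.ofReal |(fderiv ℝ g x).det| * ENNReal.ofReal (φ (g x))
        = ENNReal.ofReal (|(fderiv ℝ g x).det| * φ (g x)) := fun x =>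
      (ENNReal.ofReal_mul (abs_nonneg _)).symm
    simp only [h]
    exact ENNReal.continuous_ofReal.comp (hdetc.mul (hφc.comp hgC.continuous))
  -- a.e. equality, hence equality everywhere
  have hae : (fun x => ENNReal.ofReal (φ x))
      =ᵐ[(volume : Measure (EuclideanSpace ℝ (Fin n)))]
        fun x => ENNReal.ofReal |(fderiv ℝ g x).det| * ENNReal.ofReal (φ (g x)) :=
    ae_eq_of_forall_setLIntegral_eq_of_sigmaFinite hc1.measurable hc2.measurable
      fun s hs _ => key s hs
  have heq := (hc1.ae_eq_iff_eq volume hc2).1 hae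
  have hp' : g p = p := hp
  have hpt := congrFun heq p
  rw [hp', ← ENNReal.ofReal_mul (abs_nonneg _)] at hpt
  have hφp := hφpos p
  have h' : φ p = |(fderiv ℝ g p).det| * φ p :=
    (ENNReal.ofReal_eq_ofReal_iff hφp.le
      (mul_nonneg (abs_nonneg _) hφp.le)).1 hpt
  have h1 : (1 : ℝ) * φ p = |(fderiv ℝ g p).det| * φ p := by linarith
  exact (mul_right_cancel₀ hφp.ne' h1).symm
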